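/- Let m be odd, m ≥ 9, m = 2k+1, with m divisible by 3. Then the 2m arcs (x_{k+i}, y_{k+2i}) and (y_{2k+2i}, x_i), i ∈ Z_m (subscripts mod m), form exactly three vertex-disjoint directed cycles, each of length 2m/3. -/
import Mathlib


/-- The `2m` leftover arcs of mixed differences of the Construction:
`(x_{k+i}, y_{k+2i})` and `(y_{2k+2i}, x_i)` for `i ∈ Z_m`, where `x`-vertices
are `Sum.inl` and `y`-vertices are `Sum.inr`. -/
def leftoverArcs (m k : ℕ) : Set ((ZMod m ⊕ ZMod m) × (ZMod m ⊕ ZMod m)) :=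
  {p | ∃ i : ZMod m,
    p = (Sum.inl ((k : ZMod m) + i), Sum.inr ((k : ZMod m) + 2 * i)) ∨
    p = (Sum.inr (2 * (k : ZMod m) + 2 * i), Sum.inl i)}

/-- The explicit cycles: on even steps `2s` we are at `x_{j + 3k²s}`, on odd
steps `2s+1` at `y_{2(j+3k²s) - k}`. -/
def cyc (m k : ℕ) {N : ℕ} (j : Fin 3) (t : ZMod N) : ZMod m ⊕ ZMod m :=
  if t.val % 2 = 0 then
    Sum.inl (((j : ℕ) : ZMod m) + 3 * (k : ZMod m) ^ 2 * ((t.val / 2 : ℕ) : ZMod m))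
  else
    Sum.inr (2 * (((j : ℕ) : ZMod m) + 3 * (k : ZMod m) ^ 2 * ((t.val / 2 : ℕ) : ZMod m))
      - (k : ZMod m))

/-- For odd `m = 2k+1 ≥ 9` divisible by 3, the `2m` leftover arcs form exactly
three vertex-disjoint directed cycles, each of length `2m/3`, together covering
all vertices. -/
theorem leftover_three_cycles (m k : ℕ) (hm : m = 2 * k + 1) (h9 : 9 ≤ m)
    (h3 : 3 ∣ m) :
    ∃ c : Fin 3 → ZMod (2 * m / 3) → ZMod m ⊕ ZMod m,
      (∀ j, Function.Injective (c j)) ∧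
      (∀ j (t : ZMod (2 * m / 3)), (c j t, c j (t + 1)) ∈ leftoverArcs m k) ∧
      (Pairwise fun j j' => Disjoint (Set.range (c j)) (Set.range (c j'))) ∧
      (⋃ j, Set.range (c j)) = Set.univ := by
  obtain ⟨q, hq⟩ := h3
  have hq3 : 3 ≤ q := by omega
  have hN : 2 * m / 3 = 2 * q := by omega
  haveI : NeZero m := ⟨by omega⟩
  haveI : NeZero (2 * m / 3) := ⟨by omega⟩
  haveI : Fact (1 < 2 * m / 3) := ⟨by omega⟩
  have h2k : (2 : ZMod m) * (k : ZMod m) = -1 := by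
    have h0 : ((2 * k + 1 : ℕ) : ZMod m) = 0 := by rw [← hm]; exact ZMod.natCast_self m
    push_cast at h0
    linear_combination h0
  have hq0 : (3 : ZMod m) * (q : ZMod m) = 0 := by
    have h0 : ((3 * q : ℕ) : ZMod m) = 0 := by rw [← hq]; exact ZMod.natCast_self m
    push_cast at h0
    linear_combination h0
  -- injectivity of s ↦ 3k²·s on [0, q)
  have hstep : ∀ s s' : ℕ, s < q → s' < q →
      3 * (k : ZMod m) ^ 2 * (s : ZMod m) = 3 * (k : ZMod m) ^ 2 * (s' : ZMod m) → s = s' := by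
    intro s s' hs hs' h
    have h4 : (4 : ZMod m) * (k : ZMod m) ^ 2 = 1 := by
      linear_combination ((2 : ZMod m) * k - 1) * h2k
    have h3s : ((3 * s : ℕ) : ZMod m) = ((3 * s' : ℕ) : ZMod m) := by
      push_cast
      linear_combination 4 * h + ((3 : ZMod m) * s' - 3 * s) * h4
    have := congrArg ZMod.val h3s
    rw [ZMod.val_natCast_of_lt (by omega), ZMod.val_natCast_of_lt (by omega)] at this
    omega
  have hval1 : ∀ t : ZMod (2 * m / 3), (t + 1).val = (t.val + 1) % (2 * m / 3) := by
    intro t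
    rw [ZMod.val_add, ZMod.val_one]
  -- injectivity of each cycle
  have hcinj : ∀ j, Function.Injective (cyc m k (N := 2 * m / 3) j) := by
    intro j t t' h
    have ht := ZMod.val_lt t
    have ht' := ZMod.val_lt t'
    have hval : t.val = t'.val := by
      unfold cyc at h
      by_cases he : t.val % 2 = 0 <;> by_cases he' : t'.val % 2 = 0
      · rw [if_pos he, if_pos he'] at h
        have h' := Sum.inl.inj h
        have : t.val / 2 = t'.val / 2 := hstep _ _ (by omega) (by omega)
          (by linear_combination h')
        omega
      · rw [if_pos he, if_neg he'] at h; exact absurd h (by simp)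
      · rw [if_neg he, if_pos he'] at h; exact absurd h (by simp)
      · rw [if_neg he, if_neg he'] at h
        have h' := Sum.inr.inj h
        have : t.val / 2 = t'.val / 2 := hstep _ _ (by omega) (by omega)
          (by linear_combination (-(k : ZMod m)) * h' +
            (3 * (k : ZMod m) ^ 2 * (((t.val / 2 : ℕ) : ZMod m)
              - ((t'.val / 2 : ℕ) : ZMod m))) * h2k)
        omega
    exact ZMod.val_injective _ hval
  -- arcs
  have harc : ∀ (j : Fin 3) (t : ZMod (2 * m / 3)),
      (cyc m k j t, cyc m k j (t + 1)) ∈ leftoverArcs m k := by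
    intro j t
    have ht := ZMod.val_lt t
    by_cases he : t.val % 2 = 0
    · have h1 : (t + 1).val = t.val + 1 := by rw [hval1]; exact Nat.mod_eq_of_lt (by omega)
      have h2 : (t + 1).val / 2 = t.val / 2 := by omega
      refine ⟨((j : ℕ) : ZMod m) + 3 * (k : ZMod m) ^ 2 * ((t.val / 2 : ℕ) : ZMod m)
        - (k : ZMod m), Or.inl ?_⟩
      unfold cyc
      rw [if_pos he, if_neg (by omega), h2]
      simp only [Prod.mk.injEq, Sum.inl.injEq, Sum.inr.injEq]
      constructor <;> ring
    · by_cases hw : t.val + 1 < 2 * m / 3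
      · have h1 : (t + 1).val = t.val + 1 := by rw [hval1]; exact Nat.mod_eq_of_lt hw
        have h2 : (t + 1).val % 2 = 0 := by omega
        have h3' : (t + 1).val / 2 = t.val / 2 + 1 := by omega
        refine ⟨((j : ℕ) : ZMod m) + 3 * (k : ZMod m) ^ 2 * ((t.val / 2 + 1 : ℕ) : ZMod m),
          Or.inr ?_⟩
        unfold cyc
        rw [if_neg he, if_pos h2, h3']
        simp only [Prod.mk.injEq, Sum.inl.injEq, Sum.inr.injEq]
        refine ⟨?_, trivial⟩
        push_cast
        linear_combination (-3 * (k : ZMod m)) * h2k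
      · have hw' : t.val + 1 = 2 * m / 3 := by omega
        have h1 : (t + 1).val = 0 := by rw [hval1, hw', Nat.mod_self]
        have hs : t.val / 2 + 1 = q := by omega
        have hcast : ((t.val / 2 : ℕ) : ZMod m) = (q : ZMod m) - 1 := by
          have h5 : ((t.val / 2 + 1 : ℕ) : ZMod m) = (q : ZMod m) := by rw [hs]
          push_cast at h5
          linear_combination h5
        refine ⟨((j : ℕ) : ZMod m) + 3 * (k : ZMod m) ^ 2 * (((t + 1).val / 2 : ℕ) : ZMod m),
          Or.inr ?_⟩
        unfold cyc
        rw [if_neg he, if_pos (by omega)]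
        simp only [Prod.mk.injEq, Sum.inl.injEq, Sum.inr.injEq]
        refine ⟨?_, trivial⟩
        rw [h1]
        norm_num
        linear_combination 6 * (k : ZMod m) ^ 2 * hcast + (-3 * (k : ZMod m)) * h2k
          + 2 * (k : ZMod m) ^ 2 * hq0
  -- a mod-3 invariant separating the three cycles
  have hjeq : ∀ (j j' : Fin 3) (t t' : ZMod (2 * m / 3)),
      cyc m k j t = cyc m k j' t' → j = j' := by
    have hk3 : (2 : ZMod 3) * (k : ZMod 3) = -1 := by
      have h0 : ((2 * k + 1 : ℕ) : ZMod 3) = 0 := by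
        have : ((3 * q : ℕ) : ZMod 3) = 0 := by
          push_cast
          have h30' : (3 : ZMod 3) = 0 := by decide
          rw [h30']
          ring
        rw [← hm, hq]
        exact_mod_cast this
      push_cast at h0
      linear_combination h0
    have h30 : (3 : ZMod 3) = 0 := rfl
    have hphi : ∀ (j : Fin 3) (t : ZMod (2 * m / 3)),
        Sum.elim (fun a : ZMod m => (ZMod.castHom (⟨q, hq⟩ : (3 : ℕ) ∣ m) (ZMod 3)) a)
          (fun b : ZMod m => -(k : ZMod 3) *
            ((ZMod.castHom (⟨q, hq⟩ : (3 : ℕ) ∣ m) (ZMod 3)) b + (k : ZMod 3)))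
          (cyc m k j t) = ((j : ℕ) : ZMod 3) := by
      intro j t
      unfold cyc
      by_cases he : t.val % 2 = 0
      · rw [if_pos he]
        simp only [Sum.elim_inl, map_add, map_mul, map_pow, map_natCast, map_ofNat]
        rw [h30]
        ring
      · rw [if_neg he]
        simp only [Sum.elim_inr, map_sub, map_add, map_mul, map_pow, map_natCast, map_ofNat]
        linear_combination (-((j : ℕ) : ZMod 3)) * hk3
          - 2 * (k : ZMod 3) ^ 3 * ((t.val / 2 : ℕ) : ZMod 3) * h30
    intro j j' t t' h
    have e1 := hphi j t
    have e2 := hphi j' t'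
    rw [h] at e1
    rw [e2] at e1
    have := congrArg ZMod.val e1
    rw [ZMod.val_natCast_of_lt j'.isLt, ZMod.val_natCast_of_lt j.isLt] at this
    exact Fin.ext this.symm
  refine ⟨cyc m k, hcinj, harc, ?_, ?_⟩
  · intro j j' hne
    rw [Set.disjoint_left]
    rintro x ⟨t, rfl⟩ ⟨t', hx⟩
    exact hne (hjeq j' j t' t hx).symm
  · have hsurj : Function.Surjective
        (fun p : Fin 3 × ZMod (2 * m / 3) => cyc m k (N := 2 * m / 3) p.1 p.2) := by
      have hinj : Function.Injective
          (fun p : Fin 3 × ZMod (2 * m / 3) => cyc m k (N := 2 * m / 3) p.1 p.2) := by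
        rintro ⟨j, t⟩ ⟨j', t'⟩ h
        simp only at h
        have hj : j = j' := hjeq j j' t t' h
        subst hj
        exact Prod.ext rfl (hcinj j h)
      have hcard : Fintype.card (Fin 3 × ZMod (2 * m / 3))
          = Fintype.card (ZMod m ⊕ ZMod m) := by
        simp only [Fintype.card_prod, Fintype.card_sum, Fintype.card_fin, ZMod.card]
        omega
      exact ((Fintype.bijective_iff_injective_and_card _).2 ⟨hinj, hcard⟩).2
    rw [Set.eq_univ_iff_forall]
    intro x
    obtain ⟨⟨j, t⟩, hx⟩ := hsurj x
    exact Set.mem_iUnion.2 ⟨j, ⟨t, hx⟩⟩
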